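/- Fix p ∈ (1,∞) with p ≠ 2 and n ∈ ℕ. Every positive linear isometry of ℓ^p_n onto itself is a permutation operator, i.e., there is a permutation π of {1,…,n} such that T(e_k) = e_{π(k)} for all standard basis vectors e_k. -/

import Mathlib

open scoped ENNReal

lemma my_rpow_add_lt {p a b : ℝ} (hp : 1 < p) (ha : 0 < a) (hb : 0 < b) :
    a ^ p + b ^ p < (a + b) ^ p := by
  have hp1 : 0 < p - 1 := by linarith
  have hab : 0 < a + b := by linarith
  have key : ∀ c : ℝ, 0 < c → c < a + b → c ^ p < c * (a + b) ^ (p - 1) := by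
    intro c hc hcab
    have h1 : c ^ p = c * c ^ (p - 1) := by
      have h := Real.rpow_add hc 1 (p - 1)
      rw [show (1 : ℝ) + (p - 1) = p by ring, Real.rpow_one] at h
      exact h
    rw [h1]
    exact mul_lt_mul_of_pos_left (Real.rpow_lt_rpow hc.le hcab hp1) hc
  have h2 : (a + b) ^ p = (a + b) * (a + b) ^ (p - 1) := by
    have h := Real.rpow_add hab 1 (p - 1)
    rw [show (1 : ℝ) + (p - 1) = p by ring, Real.rpow_one] at h
    exact h
  calc a ^ p + b ^ p < a * (a + b) ^ (p - 1) + b * (a + b) ^ (p - 1) :=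
        add_lt_add (key a ha (by linarith)) (key b hb (by linarith))
    _ = (a + b) * (a + b) ^ (p - 1) := by ring
    _ = (a + b) ^ p := h2.symm

lemma my_rpow_add_le {p a b : ℝ} (hp : 1 < p) (ha : 0 ≤ a) (hb : 0 ≤ b) :
    a ^ p + b ^ p ≤ (a + b) ^ p := by
  rcases ha.eq_or_lt with h | h
  · simp [← h, Real.zero_rpow (by linarith : p ≠ 0)]
  rcases hb.eq_or_lt with h' | h'
  · simp [← h', Real.zero_rpow (by linarith : p ≠ 0)]
  exact (my_rpow_add_lt hp h h').le

lemma my_rpow_eq_disj {p a b : ℝ} (hp : 1 < p) (ha : 0 ≤ a) (hb : 0 ≤ b)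
    (h : a ^ p + b ^ p = (a + b) ^ p) : a = 0 ∨ b = 0 := by
  by_contra hc
  push_neg at hc
  exact absurd h (my_rpow_add_lt hp (ha.lt_of_ne' hc.1) (hb.lt_of_ne' hc.2)).ne

/-- For `p ∈ (1,∞)`, `p ≠ 2`, every positive linear isometry of
`ℓ^p_n` onto itself is a permutation operator: there is a permutation `π` of `{1,…,n}`
with `T eₖ = e_{π(k)}` for all standard basis vectors. -/
theorem positive_isometry_lp_is_permutation
    (p : ℝ) (hp : 1 < p) (hp2 : p ≠ 2) (n : ℕ)
    (T : PiLp (ENNReal.ofReal p) (fun _ : Fin n => ℝ) →ₗ[ℝ]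
      PiLp (ENNReal.ofReal p) (fun _ : Fin n => ℝ))
    (hsurj : Function.Surjective T)
    (hiso : ∀ x, ‖T x‖ = ‖x‖)
    (hpos : ∀ x, (∀ i, 0 ≤ (WithLp.equiv (ENNReal.ofReal p) (∀ _ : Fin n, ℝ)) x i) →
      ∀ i, 0 ≤ (WithLp.equiv (ENNReal.ofReal p) (∀ _ : Fin n, ℝ)) (T x) i) :
    ∃ π : Equiv.Perm (Fin n), ∀ k : Fin n,
      T ((WithLp.equiv (ENNReal.ofReal p) (∀ _ : Fin n, ℝ)).symm (Pi.single k 1))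
        = (WithLp.equiv (ENNReal.ofReal p) (∀ _ : Fin n, ℝ)).symm (Pi.single (π k) 1) := by
  classical
  have hp0 : 0 < p := by linarith
  have hq2 : (ENNReal.ofReal p).toReal = p := ENNReal.toReal_ofReal hp0.le
  have hq0 : 0 < (ENNReal.ofReal p).toReal := by rw [hq2]; exact hp0
  have hnorm : ∀ x : PiLp (ENNReal.ofReal p) (fun _ : Fin n => ℝ),
      ‖x‖ = (∑ i, |x i| ^ p) ^ (1/p) := by
    intro x
    rw [PiLp.norm_eq_sum hq0]
    simp [hq2, Real.norm_eq_abs]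
  have hS : ∀ x : PiLp (ENNReal.ofReal p) (fun _ : Fin n => ℝ),
      (∑ i, |x i| ^ p) = ‖x‖ ^ p := by
    intro x
    have hs : (0:ℝ) ≤ ∑ i, |x i| ^ p :=
      Finset.sum_nonneg fun i _ => Real.rpow_nonneg (abs_nonneg _) _
    rw [hnorm x, ← Real.rpow_mul hs, one_div, inv_mul_cancel₀ hp0.ne', Real.rpow_one]
  have hSiso : ∀ x : PiLp (ENNReal.ofReal p) (fun _ : Fin n => ℝ),
      (∑ i, |T x i| ^ p) = ∑ i, |x i| ^ p := by
    intro x; rw [hS, hS, hiso]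
  have hpos' : ∀ x : PiLp (ENNReal.ofReal p) (fun _ : Fin n => ℝ),
      (∀ i, 0 ≤ x i) → ∀ i, 0 ≤ T x i := fun x hx i => hpos x hx i
  -- basis vectors
  set e : Fin n → PiLp (ENNReal.ofReal p) (fun _ : Fin n => ℝ) :=
    fun k => (WithLp.equiv (ENNReal.ofReal p) (∀ _ : Fin n, ℝ)).symm (Pi.single k 1) with he
  have he_app : ∀ k i, e k i = (Pi.single k 1 : ∀ _ : Fin n, ℝ) i := fun k i => rfl
  set f : Fin n → PiLp (ENNReal.ofReal p) (fun _ : Fin n => ℝ) := fun k => T (e k) with hf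
  have hfpos : ∀ k i, 0 ≤ f k i := by
    intro k i
    refine hpos' (e k) (fun j => ?_) i
    rw [he_app]
    rcases eq_or_ne j k with h | h
    · subst h; simp
    · simp [Pi.single_eq_of_ne h]
  -- sum of single
  have hsingle : ∀ k : Fin n, (∑ i, |(Pi.single k 1 : ∀ _ : Fin n, ℝ) i| ^ p) = 1 := by
    intro k
    rw [Finset.sum_eq_single k]
    · simp
    · intro i _ hik
      simp [Pi.single_eq_of_ne hik, Real.zero_rpow hp0.ne']
    · intro h; exact absurd (Finset.mem_univ k) h
  have hSf : ∀ k, (∑ i, (f k i) ^ p) = 1 := by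
    intro k
    have h2 : (∑ i, |f k i| ^ p) = 1 := by
      have h : (∑ i, |f k i| ^ p) = ∑ i, |e k i| ^ p := hSiso (e k)
      rw [h, Finset.sum_congr rfl fun i _ => by rw [he_app k i]]
      exact hsingle k
    rw [← h2]
    exact Finset.sum_congr rfl fun i _ => by rw [abs_of_nonneg (hfpos k i)]
  -- disjoint supports
  have hdisj : ∀ j k : Fin n, j ≠ k → ∀ i, f j i = 0 ∨ f k i = 0 := by
    intro j k hjk i
    have hsum : (∑ i, (f j i + f k i) ^ p) = 2 := by
      have hTadd : T (e j + e k) = f j + f k := by rw [hf, map_add]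
      have h1 := hSiso (e j + e k)
      have hR : (∑ i, |(e j + e k) i| ^ p) = 2 := by
        have : ∀ i, |(e j + e k) i| ^ p
            = |(Pi.single j 1 : ∀ _ : Fin n, ℝ) i| ^ p + |(Pi.single k 1 : ∀ _ : Fin n, ℝ) i| ^ p := by
          intro i
          have hadd : (e j + e k) i = (Pi.single j 1 : ∀ _ : Fin n, ℝ) i + (Pi.single k 1 : ∀ _ : Fin n, ℝ) i := rfl
          rw [hadd]
          rcases eq_or_ne i j with h | h
          · subst h
            simp [Pi.single_eq_of_ne hjk, Real.zero_rpow hp0.ne']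
          rcases eq_or_ne i k with h' | h'
          · subst h'
            simp [Pi.single_eq_of_ne h, Real.zero_rpow hp0.ne']
          · simp [Pi.single_eq_of_ne h, Pi.single_eq_of_ne h', Real.zero_rpow hp0.ne']
        rw [Finset.sum_congr rfl fun i _ => this i, Finset.sum_add_distrib,
          hsingle j, hsingle k]
        norm_num
      have hL : (∑ i, |T (e j + e k) i| ^ p) = ∑ i, (f j i + f k i) ^ p := by
        refine Finset.sum_congr rfl fun i _ => ?_
        have : T (e j + e k) i = f j i + f k i := by rw [hTadd]; rfl
        rw [this, abs_of_nonneg (add_nonneg (hfpos j i) (hfpos k i))]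
      rw [hL] at h1
      rw [h1, hR]
    have hsum2 : (∑ i, ((f j i) ^ p + (f k i) ^ p)) = 2 := by
      rw [Finset.sum_add_distrib, hSf j, hSf k]; norm_num
    have hle : ∀ i ∈ Finset.univ, (f j i) ^ p + (f k i) ^ p ≤ (f j i + f k i) ^ p :=
      fun i _ => my_rpow_add_le hp (hfpos j i) (hfpos k i)
    have heq : ∀ i ∈ Finset.univ, (f j i) ^ p + (f k i) ^ p = (f j i + f k i) ^ p := by
      rw [← Finset.sum_eq_sum_iff_of_le hle]
      rw [hsum, hsum2]
    exact my_rpow_eq_disj hp (hfpos j i) (hfpos k i) (heq i (Finset.mem_univ i))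
  -- nonzero coordinate
  have hne : ∀ k, ∃ i, f k i ≠ 0 := by
    intro k
    by_contra h
    push_neg at h
    have := hSf k
    rw [Finset.sum_eq_zero (fun i _ => by rw [h i, Real.zero_rpow hp0.ne'])] at this
    norm_num at this
  choose π0 hπ0 using hne
  have hinj : Function.Injective π0 := by
    intro j k h
    by_contra hjk
    rcases hdisj j k hjk (π0 j) with h' | h'
    · exact hπ0 j h'
    · rw [h] at h'; exact hπ0 k h'
  have hbij : Function.Bijective π0 := Finite.injective_iff_bijective.mp hinj
  refine ⟨Equiv.ofBijective π0 hbij, fun k => ?_⟩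
  have hzero : ∀ i, i ≠ π0 k → f k i = 0 := by
    intro i hi
    obtain ⟨j, hj⟩ := hbij.2 i
    have hjk : j ≠ k := fun h => hi (by rw [← hj, h])
    rcases hdisj k j hjk.symm i with h' | h'
    · exact h'
    · rw [← hj] at h'; exact absurd h' (hπ0 j)
  have hone : f k (π0 k) = 1 := by
    have h1 : (∑ i, (f k i) ^ p) = (f k (π0 k)) ^ p := by
      rw [Finset.sum_eq_single (π0 k)]
      · intro i _ hi; rw [hzero i hi, Real.zero_rpow hp0.ne']
      · intro h; exact absurd (Finset.mem_univ _) h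
    have h2 : (f k (π0 k)) ^ p = 1 := by rw [← h1, hSf k]
    have hc := hfpos k (π0 k)
    calc f k (π0 k) = ((f k (π0 k)) ^ p) ^ (1/p) := by
          rw [← Real.rpow_mul hc, mul_one_div_cancel hp0.ne', Real.rpow_one]
      _ = 1 := by rw [h2, Real.one_rpow]
  show f k = (WithLp.equiv (ENNReal.ofReal p) (∀ _ : Fin n, ℝ)).symm
      (Pi.single (Equiv.ofBijective π0 hbij k) 1)
  refine PiLp.ext fun i => ?_
  show f k i = (Pi.single (π0 k) 1 : ∀ _ : Fin n, ℝ) i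
  rcases eq_or_ne i (π0 k) with h | h
  · subst h; rw [hone]; simp
  · rw [hzero i h, Pi.single_eq_of_ne h]
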